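/- Let $A \subset B$ be an extension of integral domains, where $A$ is a unique factorization domain, the units of $B$ that lie in $A$ are already units of $A$ (i.e. $B^* \cap A \subset A^*$), and $B$ is flat as an $A$-module. Then $Q(A) \cap B = A$, i.e. every element of $B$ that can be written as a fraction of two elements of $A$ (inside the fraction field of $B$) already lies in $A$. -/

import Mathlib

open TensorProduct

/-- Key step via the equational criterion / exactness: if `p, q` are relatively prime in a
domain `A` and `B` is a flat `A`-algebra in which `q • x = p • 1`, then there is `d : B`
with `x = p • d` and `1 = q • d`. -/
theorem bass_key {A B : Type*} [CommRing A] [IsDomain A] [UniqueFactorizationMonoid A]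
    [CommRing B] [Algebra A B] [Module.Flat A B]
    (p q : A) (hrel : IsRelPrime p q) (x : B) (hx : q • x = p • (1 : B)) :
    ∃ d : B, x = p • d ∧ (1 : B) = q • d := by
  classical
  -- the exact sequence A → A × A → A
  set f : A →ₗ[A] A × A := LinearMap.toSpanSingleton A (A × A) (p, q) with hf
  set g : A × A →ₗ[A] A := q • LinearMap.fst A A A - p • LinearMap.snd A A A with hg
  have hexact : Function.Exact f g := by
    intro y
    constructor
    · intro hy
      simp only [hg, LinearMap.sub_apply, LinearMap.smul_apply, LinearMap.fst_apply,
        LinearMap.snd_apply, smul_eq_mul, sub_eq_zero] at hy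
      -- q * y.1 = p * y.2
      have hpdvd : p ∣ y.1 := hrel.dvd_of_dvd_mul_left ⟨y.2, by linear_combination hy⟩
      obtain ⟨c, hc⟩ := hpdvd
      rcases eq_or_ne p 0 with hp0 | hp0
      · -- p = 0 : then q is a unit
        have hqunit : IsUnit q := hrel.symm (dvd_refl q) (hp0 ▸ dvd_zero q)
        obtain ⟨u, rfl⟩ := hqunit
        refine ⟨(↑u⁻¹ : Aˣ) * y.2, ?_⟩
        have h1 : y.1 = 0 := by
          have : (u : A) * y.1 = 0 := by rw [hy, hp0, zero_mul]
          exact (u.mul_right_eq_zero).mp this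
        simp only [hf, LinearMap.toSpanSingleton_apply, Prod.smul_mk, smul_eq_mul, hp0]
        ext
        · simp [h1]
        · show ((u⁻¹ : Aˣ) : A) * y.2 * (u : A) = y.2
          rw [mul_comm ((u⁻¹ : Aˣ) : A) y.2, Units.inv_mul_cancel_right]
      · refine ⟨c, ?_⟩
        have hc2 : y.2 = q * c := by
          have : p * y.2 = p * (q * c) := by
            rw [← hy, hc]; ring
          exact mul_left_cancel₀ hp0 this
        simp only [hf, LinearMap.toSpanSingleton_apply, Prod.smul_mk, smul_eq_mul]
        ext
        · simp [hc, mul_comm]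
        · simp [hc2, mul_comm]
    · rintro ⟨a, rfl⟩
      simp only [hf, hg, LinearMap.toSpanSingleton_apply, Prod.smul_mk, smul_eq_mul,
        LinearMap.sub_apply, LinearMap.smul_apply, LinearMap.fst_apply, LinearMap.snd_apply]
      ring
  have hBexact : Function.Exact (LinearMap.lTensor B f) (LinearMap.lTensor B g) :=
    Module.Flat.lTensor_exact B hexact
  -- the element x ⊗ (1,0) + 1 ⊗ (0,1) is killed by lTensor B g
  set t : B ⊗[A] (A × A) := x ⊗ₜ[A] ((1 : A), (0 : A)) + (1 : B) ⊗ₜ[A] ((0 : A), (1 : A))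
    with ht
  have htzero : LinearMap.lTensor B g t = 0 := by
    simp only [ht, map_add, LinearMap.lTensor_tmul]
    have h1 : g ((1 : A), (0 : A)) = q := by simp [hg]
    have h2 : g ((0 : A), (1 : A)) = -p := by simp [hg]
    have e1 : (q • x) ⊗ₜ[A] (1 : A) = x ⊗ₜ[A] q := by
      rw [TensorProduct.smul_tmul]; simp
    have e2 : (p • (1 : B)) ⊗ₜ[A] (1 : A) = (1 : B) ⊗ₜ[A] p := by
      rw [TensorProduct.smul_tmul]; simp
    rw [h1, h2, ← e1,
      show (1 : B) ⊗ₜ[A] (-p) = -((p • (1 : B)) ⊗ₜ[A] (1 : A)) by rw [e2, TensorProduct.tmul_neg],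
      ← sub_eq_add_neg, ← TensorProduct.sub_tmul, hx, sub_self, TensorProduct.zero_tmul]
  obtain ⟨s, hs⟩ := (hBexact t).mp htzero
  -- s = d ⊗ 1 for d := rid s
  set d : B := TensorProduct.rid A B s with hd
  have hs1 : s = d ⊗ₜ[A] (1 : A) := by
    conv_lhs => rw [← (TensorProduct.rid A B).symm_apply_apply s]
    rw [TensorProduct.rid_symm_apply]
  refine ⟨d, ?_, ?_⟩
  · -- apply rid ∘ lTensor B fst to hs
    have := congrArg (fun z => TensorProduct.rid A B (LinearMap.lTensor B (LinearMap.fst A A A) z)) hs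
    simp only [hs1, ht, map_add, LinearMap.lTensor_tmul, LinearMap.fst_apply,
      LinearMap.toSpanSingleton_apply, TensorProduct.rid_tmul, hf] at this
    simpa using this.symm
  · have := congrArg (fun z => TensorProduct.rid A B (LinearMap.lTensor B (LinearMap.snd A A A) z)) hs
    simp only [hs1, ht, map_add, LinearMap.lTensor_tmul, LinearMap.snd_apply,
      LinearMap.toSpanSingleton_apply, TensorProduct.rid_tmul, hf] at this
    simpa using this.symm

/-- Bass' lemma: if `A ⊆ B` are integral domains, `A` a UFD, units of `B` lying in `A`
are units of `A`, and `B` is flat over `A`, then `Q(A) ∩ B = A`. -/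
theorem stmt_0 {A B : Type*} [CommRing A] [IsDomain A] [UniqueFactorizationMonoid A]
    [CommRing B] [IsDomain B] [Algebra A B]
    (hinj : Function.Injective (algebraMap A B))
    [Module.Flat A B]
    (hunits : ∀ a : A, IsUnit (algebraMap A B a) → IsUnit a)
    (x : B) (hx : ∃ p q : A, q ≠ 0 ∧ x * algebraMap A B q = algebraMap A B p) :
    ∃ a : A, algebraMap A B a = x := by
  obtain ⟨p, q, hq, hxy⟩ := hx
  obtain ⟨q', p', c, hrel, hcq, hcp⟩ :=
    UniqueFactorizationMonoid.exists_reduced_factors q hq p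
  have hc0 : c ≠ 0 := fun h => hq (by rw [← hcq, h, zero_mul])
  have hq'0 : q' ≠ 0 := fun h => hq (by rw [← hcq, h, mul_zero])
  have hcB : algebraMap A B c ≠ 0 := fun h => hc0 (hinj (by simpa using h))
  have hq'B : algebraMap A B q' ≠ 0 := fun h => hq'0 (hinj (by simpa using h))
  -- cancel c : x * q' = p'
  have hxy' : x * algebraMap A B q' = algebraMap A B p' := by
    have : algebraMap A B c * (x * algebraMap A B q') = algebraMap A B c * algebraMap A B p' :=
      calc algebraMap A B c * (x * algebraMap A B q')
          = x * algebraMap A B (c * q') := by rw [map_mul]; ring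
        _ = algebraMap A B p := by rw [hcq, hxy]
        _ = algebraMap A B c * algebraMap A B p' := by rw [← hcp, map_mul]
    exact mul_left_cancel₀ hcB this
  have hsmul : q' • x = p' • (1 : B) := by
    rw [Algebra.smul_def, Algebra.smul_def, mul_one, mul_comm]
    exact hxy'
  obtain ⟨d, hxd, h1d⟩ := bass_key (B := B) p' q' (fun k hk hk' => hrel hk' hk) x hsmul
  -- q' is a unit in B, hence in A
  have hq'unitB : IsUnit (algebraMap A B q') := by
    refine IsUnit.of_mul_eq_one d ?_
    rw [← Algebra.smul_def, ← h1d]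
  obtain ⟨u, hu⟩ := hunits q' hq'unitB
  refine ⟨p' * ↑u⁻¹, ?_⟩
  have : algebraMap A B (p' * ↑u⁻¹) * algebraMap A B q' = x * algebraMap A B q' := by
    rw [hxy', ← map_mul]
    congr 1
    rw [mul_assoc, ← hu]
    simp
  exact mul_right_cancel₀ hq'B this
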